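/- (Jacobi / Desnanot–Jacobi identity) Let n ≥ 2, let J be a real n×n matrix, let i₁ < i₂ be row indices and j₁ < j₂ be column indices. Then det(J) · det(J[i₁,i₂; j₁,j₂]) = det(J[i₁; j₁]) · det(J[i₂; j₂]) − det(J[i₁; j₂]) · det(J[i₂; j₁]), where J[i₁,…; j₁,…] denotes the submatrix of J obtained by deleting the rows i₁,… and the columns j₁,…. -/

import Mathlib

open Matrix

/-- The strictly monotone embedding `Fin m → Fin (m+2)` that skips the two
indices `i₁ < i₂`; used to delete two rows (or columns) from a matrix. -/
def delTwo {m : ℕ} (i₁ i₂ : Fin (m + 2)) (h : i₁ < i₂) : Fin m → Fin (m + 2) :=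
  i₂.succAbove ∘ (⟨i₁.1, by have h' : (i₁ : ℕ) < (i₂ : ℕ) := h; omega⟩ : Fin (m + 1)).succAbove

lemma djAux_succAbove {m : ℕ} (p : Fin (m + 2)) (q : Fin (m + 1)) (h : (q : ℕ) < (p : ℕ)) :
    p.succAbove q = q.castSucc :=
  Fin.succAbove_of_castSucc_lt p q (by simpa [Fin.lt_def] using h)

lemma djAux_single {m : ℕ} (p i : Fin (m + 2)) (q : Fin (m + 1)) (hq : p.succAbove q = i)
    (r : Fin (m + 1)) :
    (Pi.single i (1:ℝ) : Fin (m+2) → ℝ) (p.succAbove r) = (Pi.single q (1:ℝ) : Fin (m+1) → ℝ) r := by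
  subst hq
  simp [Pi.single_apply, (Fin.succAbove_right_injective (p := p)).eq_iff]

lemma djAux_det_update {n : ℕ} (A : Matrix (Fin (n+1)) (Fin (n+1)) ℝ) (i j : Fin (n+1)) (c : ℝ) :
    det (A.updateCol j fun r => c * (Pi.single i (1:ℝ) : Fin (n+1) → ℝ) r) =
      (-1) ^ (i + j : ℕ) * c * det (A.submatrix i.succAbove j.succAbove) := by
  rw [det_succ_column _ j]
  rw [Fintype.sum_eq_single i fun k hk => ?_]
  · simp [mul_assoc]
  · simp [Pi.single_eq_of_ne hk]

lemma djDetB {ι : Type*} [Fintype ι] [DecidableEq ι] (u v : ι → ℝ) (j₁ j₂ : ι)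
    (hj : j₁ ≠ j₂) :
    det (((1 : Matrix ι ι ℝ).updateCol j₁ u).updateCol j₂ v) =
      u j₁ * v j₂ - v j₁ * u j₂ := by
  set C : Matrix ι (Fin 2) ℝ := Matrix.of fun r k =>
    if k = 0 then u r - (1 : Matrix ι ι ℝ) r j₁ else v r - (1 : Matrix ι ι ℝ) r j₂ with hC
  set Rm : Matrix (Fin 2) ι ℝ := Matrix.of fun k c =>
    if k = 0 then (1 : Matrix ι ι ℝ) j₁ c else (1 : Matrix ι ι ℝ) j₂ c with hR
  have hBCR : ((1 : Matrix ι ι ℝ).updateCol j₁ u).updateCol j₂ v = 1 + C * Rm := by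
    ext r c
    simp only [Matrix.add_apply, Matrix.mul_apply, Fin.sum_univ_two, hC, hR, Matrix.of_apply]
    by_cases h2 : c = j₂
    · subst h2
      simp [Matrix.updateCol_apply, Matrix.one_apply, hj]
    · by_cases h1 : c = j₁
      · subst h1
        simp [Matrix.updateCol_apply, Matrix.one_apply, hj, Ne.symm h2]
      · simp [Matrix.updateCol_apply, Matrix.one_apply, h1, h2, Ne.symm h1, Ne.symm h2]
  rw [hBCR, det_one_add_mul_comm, det_fin_two]
  simp [Matrix.add_apply, Matrix.mul_apply, Matrix.one_apply, hC, hR, ite_mul, zero_mul,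
    one_mul, Finset.sum_ite_eq, hj, Ne.symm hj]

lemma djKey (m : ℕ) (J : Matrix (Fin (m + 2)) (Fin (m + 2)) ℝ)
    (i₁ i₂ j₁ j₂ : Fin (m + 2)) (hi : i₁ < i₂) (hj : j₁ < j₂) :
    J.det * (J.det * (J.submatrix (delTwo i₁ i₂ hi) (delTwo j₁ j₂ hj)).det) =
      J.det * ((J.submatrix i₁.succAbove j₁.succAbove).det *
          (J.submatrix i₂.succAbove j₂.succAbove).det -
        (J.submatrix i₁.succAbove j₂.succAbove).det *
          (J.submatrix i₂.succAbove j₁.succAbove).det) := by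
  have hi' : (i₁ : ℕ) < (i₂ : ℕ) := hi
  have hj' : (j₁ : ℕ) < (j₂ : ℕ) := hj
  set i₁' : Fin (m+1) := ⟨i₁.1, by omega⟩ with hdefi
  set j₁' : Fin (m+1) := ⟨j₁.1, by omega⟩ with hdefj
  have hsi : i₂.succAbove i₁' = i₁ := by
    rw [djAux_succAbove i₂ i₁' hi']; exact Fin.ext rfl
  have hsj : j₂.succAbove j₁' = j₁ := by
    rw [djAux_succAbove j₂ j₁' hj']; exact Fin.ext rfl
  set u : Fin (m+2) → ℝ := fun r => adjugate J r i₁ with hu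
  set v : Fin (m+2) → ℝ := fun r => adjugate J r i₂ with hv
  set B : Matrix (Fin (m+2)) (Fin (m+2)) ℝ :=
    ((1 : Matrix (Fin (m+2)) (Fin (m+2)) ℝ).updateCol j₁ u).updateCol j₂ v with hB
  set w₁ : Fin (m+2) → ℝ := fun r => J.det * (Pi.single i₁ (1:ℝ) : Fin (m+2) → ℝ) r with hw₁
  set w₂ : Fin (m+2) → ℝ := fun r => J.det * (Pi.single i₂ (1:ℝ) : Fin (m+2) → ℝ) r with hw₂
  -- J * B is J with columns j₁, j₂ replaced
  have hJB : J * B = (J.updateCol j₁ w₁).updateCol j₂ w₂ := by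
    ext r c
    rw [Matrix.mul_apply]
    by_cases h2 : c = j₂
    · have : ∀ k, J r k * B k c = J r k * adjugate J k i₂ := fun k => by
        simp [hB, hv, Matrix.updateCol_apply, h2]
      rw [Finset.sum_congr rfl fun k _ => this k, ← Matrix.mul_apply, mul_adjugate]
      simp [hw₂, h2, Matrix.updateCol_apply, Matrix.one_apply, Pi.single_apply]
    · by_cases h1 : c = j₁
      · have : ∀ k, J r k * B k c = J r k * adjugate J k i₁ := fun k => by
          rw [hB, Matrix.updateCol_apply, if_neg h2, Matrix.updateCol_apply, if_pos h1]
        rw [Finset.sum_congr rfl fun k _ => this k, ← Matrix.mul_apply, mul_adjugate,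
          Matrix.updateCol_apply, if_neg h2, Matrix.updateCol_apply, if_pos h1]
        simp [hw₁, Matrix.one_apply, Pi.single_apply]
      · have : ∀ k, J r k * B k c = J r k * (1 : Matrix (Fin (m+2)) (Fin (m+2)) ℝ) k c :=
          fun k => by simp [hB, Matrix.updateCol_apply, h1, h2]
        rw [Finset.sum_congr rfl fun k _ => this k, ← Matrix.mul_apply, Matrix.mul_one]
        simp [Matrix.updateCol_apply, h1, h2]
  -- the inner submatrix after deleting row i₂ / column j₂
  have hsub : (J.updateCol j₁ w₁).submatrix i₂.succAbove j₂.succAbove =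
      (J.submatrix i₂.succAbove j₂.succAbove).updateCol j₁'
        (fun r => J.det * (Pi.single i₁' (1:ℝ) : Fin (m+1) → ℝ) r) := by
    ext r c
    by_cases h : c = j₁'
    · subst h
      simp [Matrix.updateCol_apply, hsj, hw₁, djAux_single i₂ i₁ i₁' hsi]
    · have : j₂.succAbove c ≠ j₁ := by
        rw [← hsj]; exact fun hcon => h ((Fin.succAbove_right_injective (p := j₂)) hcon)
      simp [Matrix.updateCol_apply, h, this]
  -- determinant of J * B
  have hdet1 : J.det * B.det =
      (-1) ^ (i₂ + j₂ : ℕ) * J.det * ((-1) ^ (i₁ + j₁ : ℕ) * J.det *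
        (J.submatrix (delTwo i₁ i₂ hi) (delTwo j₁ j₂ hj)).det) := by
    rw [← det_mul, hJB, djAux_det_update, hsub, djAux_det_update, Matrix.submatrix_submatrix]
    have h1 : (i₁' + j₁' : ℕ) = (i₁ + j₁ : ℕ) := rfl
    have h2 : i₂.succAbove ∘ i₁'.succAbove = delTwo i₁ i₂ hi := rfl
    have h3 : j₂.succAbove ∘ j₁'.succAbove = delTwo j₁ j₂ hj := rfl
    rw [h1, h2, h3]
  -- determinant of B
  have hdet2 : B.det = u j₁ * v j₂ - v j₁ * u j₂ := djDetB u v j₁ j₂ hj.ne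
  -- adjugate entries as minors
  have ha11 : u j₁ = (-1) ^ (i₁ + j₁ : ℕ) * (J.submatrix i₁.succAbove j₁.succAbove).det :=
    adjugate_fin_succ_eq_det_submatrix J j₁ i₁
  have ha22 : v j₂ = (-1) ^ (i₂ + j₂ : ℕ) * (J.submatrix i₂.succAbove j₂.succAbove).det :=
    adjugate_fin_succ_eq_det_submatrix J j₂ i₂
  have ha12 : u j₂ = (-1) ^ (i₁ + j₂ : ℕ) * (J.submatrix i₁.succAbove j₂.succAbove).det :=
    adjugate_fin_succ_eq_det_submatrix J j₂ i₁
  have ha21 : v j₁ = (-1) ^ (i₂ + j₁ : ℕ) * (J.submatrix i₂.succAbove j₁.succAbove).det :=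
    adjugate_fin_succ_eq_det_submatrix J j₁ i₂
  rw [hdet2, ha11, ha22, ha12, ha21] at hdet1
  have hpar : (-1:ℝ) ^ (i₁ + j₁ : ℕ) * (-1) ^ (i₂ + j₂ : ℕ) =
      (-1) ^ (i₁ + j₂ : ℕ) * (-1) ^ (i₂ + j₁ : ℕ) := by
    rw [← pow_add, ← pow_add]
    congr 1
    omega
  rcases neg_one_pow_eq_or ℝ (i₁ + j₁ : ℕ) with h1 | h1 <;>
    rcases neg_one_pow_eq_or ℝ (i₂ + j₂ : ℕ) with h2 | h2 <;>
    rcases neg_one_pow_eq_or ℝ (i₁ + j₂ : ℕ) with h3 | h3 <;>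
    rcases neg_one_pow_eq_or ℝ (i₂ + j₁ : ℕ) with h4 | h4 <;>
    rw [h1, h2, h3, h4] at hdet1 hpar <;>
    first
      | linarith [hdet1]
      | (exfalso; norm_num at hpar)

/-- The Desnanot–Jacobi identity:
`det J · det J[i₁,i₂;j₁,j₂] = det J[i₁;j₁] det J[i₂;j₂] - det J[i₁;j₂] det J[i₂;j₁]`. -/
theorem stmt12 (m : ℕ) (J : Matrix (Fin (m + 2)) (Fin (m + 2)) ℝ)
    (i₁ i₂ j₁ j₂ : Fin (m + 2)) (hi : i₁ < i₂) (hj : j₁ < j₂) :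
    J.det * (J.submatrix (delTwo i₁ i₂ hi) (delTwo j₁ j₂ hj)).det =
      (J.submatrix i₁.succAbove j₁.succAbove).det *
        (J.submatrix i₂.succAbove j₂.succAbove).det -
      (J.submatrix i₁.succAbove j₂.succAbove).det *
        (J.submatrix i₂.succAbove j₁.succAbove).det := by
  have key : ∀ K : Matrix (Fin (m+2)) (Fin (m+2)) ℝ, K.det ≠ 0 →
      K.det * (K.submatrix (delTwo i₁ i₂ hi) (delTwo j₁ j₂ hj)).det =
        (K.submatrix i₁.succAbove j₁.succAbove).det *
          (K.submatrix i₂.succAbove j₂.succAbove).det -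
        (K.submatrix i₁.succAbove j₂.succAbove).det *
          (K.submatrix i₂.succAbove j₁.succAbove).det :=
    fun K hK => mul_left_cancel₀ hK (djKey m K i₁ i₂ j₁ j₂ hi hj)
  set A : ℝ → Matrix (Fin (m+2)) (Fin (m+2)) ℝ := fun t => J + t • 1 with hA
  have hAc : Continuous A :=
    continuous_const.add (continuous_id.smul continuous_const)
  have hF : Continuous fun t =>
      (A t).det * ((A t).submatrix (delTwo i₁ i₂ hi) (delTwo j₁ j₂ hj)).det :=
    hAc.matrix_det.mul (hAc.matrix_submatrix _ _).matrix_det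
  have hG : Continuous fun t =>
      ((A t).submatrix i₁.succAbove j₁.succAbove).det *
        ((A t).submatrix i₂.succAbove j₂.succAbove).det -
      ((A t).submatrix i₁.succAbove j₂.succAbove).det *
        ((A t).submatrix i₂.succAbove j₁.succAbove).det :=
    (((hAc.matrix_submatrix _ _).matrix_det.mul
        (hAc.matrix_submatrix _ _).matrix_det).sub
      ((hAc.matrix_submatrix _ _).matrix_det.mul
        (hAc.matrix_submatrix _ _).matrix_det))
  -- the set of good parameters is dense
  have hpev : ∀ t : ℝ, (Matrix.charpoly (-J)).eval t = (A t).det := by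
    intro t
    have h1 : (Polynomial.evalRingHom t) (Matrix.charpoly (-J)) =
        ((charmatrix (-J)).map (Polynomial.evalRingHom t)).det :=
      RingHom.map_det _ _
    have h2 : (charmatrix (-J)).map (Polynomial.evalRingHom t) = A t := by
      ext i j
      by_cases h : i = j
      · subst h
        simp [charmatrix_apply_eq, hA, Matrix.add_apply, Matrix.one_apply, add_comm]
      · simp [charmatrix_apply_ne _ _ _ h, hA, Matrix.add_apply, Matrix.one_apply, h]
    exact h1.trans (by rw [h2])
  have hp0 : Matrix.charpoly (-J) ≠ 0 := (Matrix.charpoly_monic _).ne_zero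
  have hfin : Set.Finite {t : ℝ | (A t).det = 0} := by
    apply Set.Finite.subset (Polynomial.finite_setOf_isRoot hp0)
    intro t ht
    simp only [Set.mem_setOf_eq, Polynomial.IsRoot, hpev]
    exact ht
  have hdense : Dense {t : ℝ | (A t).det ≠ 0} := by
    have := (hfin.countable).dense_compl ℝ
    simpa [Set.compl_setOf] using this
  have heq : (fun t => (A t).det *
        ((A t).submatrix (delTwo i₁ i₂ hi) (delTwo j₁ j₂ hj)).det) =
      fun t => ((A t).submatrix i₁.succAbove j₁.succAbove).det *
          ((A t).submatrix i₂.succAbove j₂.succAbove).det -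
        ((A t).submatrix i₁.succAbove j₂.succAbove).det *
          ((A t).submatrix i₂.succAbove j₁.succAbove).det :=
    Continuous.ext_on hdense hF hG fun t ht => key (A t) ht
  have h0 := congrFun heq 0
  have hA0 : A 0 = J := by simp [hA]
  rwa [hA0] at h0
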